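/- Let 0 < q < 1, β ∈ ℝ, n, p ∈ ℕ with 1 ≤ p ≤ n, and t ∈ ℝ. Then Σ_{k=n−p}^{n−1} Σ_{j=k+1}^∞ q^j cos(jt − βπ/2) = Z_q(t) · Σ_{k=n−p+1}^{n} q^k cos(kt + θ_q(t) − βπ/2), where Z_q(t) = 1/√(1 − 2q cos t + q²) and θ_q(t) = arctan(q sin t/(1 − q cos t)). -/

import Mathlib

open Real Finset

set_option maxHeartbeats 1000000 in
lemma tail_sum (q α t : ℝ) (hq0 : 0 < q) (hq1 : q < 1) (m : ℕ) :
    ∑' j : ℕ, q ^ (m + j) * Real.cos (((m + j : ℕ) : ℝ) * t - α)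
      = (1 / Real.sqrt (1 - 2 * q * Real.cos t + q ^ 2)) *
        (q ^ m * Real.cos ((m : ℝ) * t +
          Real.arctan (q * Real.sin t / (1 - q * Real.cos t)) - α)) := by
  set c : ℝ := Real.cos t
  set s : ℝ := Real.sin t
  have hc : 0 < 1 - q * c := by
    have := Real.cos_le_one t
    nlinarith
  have hpyth : s ^ 2 + c ^ 2 = 1 := Real.sin_sq_add_cos_sq t
  set D : ℝ := 1 - 2 * q * c + q ^ 2 with hDdef
  have hD : D = (1 - q * c) ^ 2 + (q * s) ^ 2 := by
    simp only [hDdef]; nlinarith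
  have hD0 : 0 < D := by nlinarith
  have hsD0 : 0 < Real.sqrt D := Real.sqrt_pos.mpr hD0
  have hsD : Real.sqrt D * Real.sqrt D = D := Real.mul_self_sqrt hD0.le
  set x : ℝ := q * s / (1 - q * c) with hxdef
  have hx1 : 1 + x ^ 2 = (Real.sqrt D / (1 - q * c)) ^ 2 := by
    rw [hxdef, div_pow, div_pow, Real.sq_sqrt hD0.le, hD]
    field_simp
  have hsx : Real.sqrt (1 + x ^ 2) = Real.sqrt D / (1 - q * c) := by
    rw [hx1, Real.sqrt_sq (by positivity)]
  have hcosθ : Real.cos (Real.arctan x) = (1 - q * c) / Real.sqrt D := by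
    rw [Real.cos_arctan]
    rw [show (1 : ℝ) + x ^ 2 = 1 + x * x by ring] at hsx ⊢
    rw [hsx]
    field_simp
  have hsinθ : Real.sin (Real.arctan x) = q * s / Real.sqrt D := by
    rw [Real.sin_arctan]
    rw [show (1 : ℝ) + x ^ 2 = 1 + x * x by ring] at hsx ⊢
    rw [hsx, hxdef]
    field_simp
  -- complex computation of the tsum
  set z : ℂ := (q : ℂ) * Complex.exp ((t : ℝ) * Complex.I) with hzdef
  have hz : ‖z‖ < 1 := by
    rw [hzdef, norm_mul, Complex.norm_exp_ofReal_mul_I, Complex.norm_real]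
    simpa [abs_of_pos hq0] using hq1
  set cc : ℂ := (q : ℂ) ^ m * Complex.exp ((((m : ℝ) * t - α : ℝ)) * Complex.I) with hccdef
  have hterm : ∀ j : ℕ, q ^ (m + j) * Real.cos (((m + j : ℕ) : ℝ) * t - α)
      = (cc * z ^ j).re := by
    intro j
    have hzj : z ^ j = (q : ℂ) ^ j * Complex.exp (((j : ℝ) * t : ℝ) * Complex.I) := by
      rw [hzdef, mul_pow, ← Complex.exp_nat_mul]
      push_cast
      ring_nf
    rw [hzj, hccdef]
    have : cc * ((q : ℂ) ^ j * Complex.exp (((j : ℝ) * t : ℝ) * Complex.I))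
        = ((q ^ (m + j) : ℝ) : ℂ) * Complex.exp (((((m + j : ℕ) : ℝ) * t - α : ℝ)) * Complex.I) := by
      rw [hccdef, mul_mul_mul_comm, ← Complex.exp_add]
      push_cast
      ring_nf
    rw [hccdef] at this
    rw [this, Complex.re_ofReal_mul, Complex.exp_ofReal_mul_I_re]
  have hsumz : Summable (fun j : ℕ => z ^ j) := summable_geometric_of_norm_lt_one hz
  have hsum : Summable (fun j : ℕ => cc * z ^ j) := hsumz.mul_left cc
  calc ∑' j : ℕ, q ^ (m + j) * Real.cos (((m + j : ℕ) : ℝ) * t - α)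
      = ∑' j : ℕ, (cc * z ^ j).re := by
        exact tsum_congr hterm
    _ = (∑' j : ℕ, cc * z ^ j).re := (Complex.re_tsum hsum).symm
    _ = (cc * (1 - z)⁻¹).re := by
        rw [tsum_mul_left, tsum_geometric_of_norm_lt_one hz]
    _ = (cc / (1 - z)).re := by rw [div_eq_mul_inv]
    _ = _ := by
        have hre : (1 - z).re = 1 - q * c := by
          simp [hzdef, Complex.exp_ofReal_mul_I_re]; exact Or.inl rfl
        have him : (1 - z).im = -(q * s) := by
          simp [hzdef, Complex.exp_ofReal_mul_I_im]; exact Or.inl rfl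
        have hns : Complex.normSq (1 - z) = D := by
          rw [Complex.normSq_apply, hre, him, hD]; ring
        have hccre : cc.re = q ^ m * Real.cos ((m : ℝ) * t - α) := by
          rw [hccdef]
          rw [show ((q:ℂ))^m = ((q^m : ℝ) : ℂ) by push_cast; ring]
          rw [Complex.re_ofReal_mul, Complex.exp_ofReal_mul_I_re]
        have hccim : cc.im = q ^ m * Real.sin ((m : ℝ) * t - α) := by
          rw [hccdef]
          rw [show ((q:ℂ))^m = ((q^m : ℝ) : ℂ) by push_cast; ring]
          rw [Complex.im_ofReal_mul, Complex.exp_ofReal_mul_I_im]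
        rw [Complex.div_re, hns, hre, him, hccre, hccim]
        rw [show (m : ℝ) * t + Real.arctan x - α = ((m : ℝ) * t - α) + Real.arctan x by ring]
        rw [Real.cos_add, hcosθ, hsinθ]
        rw [← hsD]
        field_simp
        rw [Real.sqrt_sq hsD0.le]
        ring

/-- For `0 < q < 1`, `β, t ∈ ℝ`, `1 ≤ p ≤ n`:
`Σ_{k=n−p}^{n−1} Σ_{j=k+1}^∞ q^j cos(jt − βπ/2)
  = Z_q(t) Σ_{k=n−p+1}^{n} q^k cos(kt + θ_q(t) − βπ/2)`. -/
theorem stmt_7 (q β t : ℝ) (hq0 : 0 < q) (hq1 : q < 1)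
    (n p : ℕ) (hp : 1 ≤ p) (hpn : p ≤ n) :
    ∑ k ∈ Finset.Ico (n - p) n,
        ∑' j : ℕ, q ^ (k + 1 + j) * Real.cos (((k + 1 + j : ℕ) : ℝ) * t - β * π / 2)
      = (1 / Real.sqrt (1 - 2 * q * Real.cos t + q ^ 2)) *
        ∑ k ∈ Finset.Icc (n - p + 1) n, q ^ k * Real.cos ((k : ℝ) * t +
          Real.arctan (q * Real.sin t / (1 - q * Real.cos t)) - β * π / 2) := by
  rw [Finset.mul_sum]
  refine Finset.sum_nbij' (fun k => k + 1) (fun k => k - 1) ?_ ?_ ?_ ?_ ?_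
  · intro k hk
    simp only [Finset.mem_Ico] at hk
    simp only [Finset.mem_Icc]
    omega
  · intro k hk
    simp only [Finset.mem_Icc] at hk
    simp only [Finset.mem_Ico]
    omega
  · intro k hk
    simp only [Finset.mem_Ico] at hk
    omega
  · intro k hk
    simp only [Finset.mem_Icc] at hk
    omega
  · intro k hk
    rw [tail_sum q (β * π / 2) t hq0 hq1 (k + 1)]
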